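/- Under a smooth change of coordinates X = X(x) with smooth inverse, if Γ^k_{ij} transforms as an affine connection and g_{ij} transforms as a covariant 2-tensor, and all mixed second partial derivatives ∂²x^m/∂X^i∂X^j commute with the relevant differentiations, then the quantity Γ̃^k_{ij} = dX^k dX^r g_{sr} Γ^s_{ij} (with dX^k = (∂X^k/∂x^α) dx^α) transforms as an affine connection if and only if the compatibility condition dx^α dx^β g_{mβ} (∂²x^m/∂X^i∂X^j)(∂X^k/∂x^α) = (∂²x^α/∂X^i∂X^j)(∂X^k/∂x^α) holds for all i, j, k. -/
import Mathlib


/-- Pointwise form of (A8): with `J k α = ∂X^k/∂x^α`, `Jinv m i = ∂x^m/∂X^i`,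
`S m i j = ∂²x^m/∂X^i∂X^j`, a connection `Γ` transforming affinely to `Γ'`, a tensor `g`
transforming to `g'`, and `dX^k = (∂X^k/∂x^α)dx^α`, the quantity
`Γ̃^k_{ij} = dX^k dX^r g_{sr} Γ^s_{ij}` transforms as an affine connection iff the
compatibility condition `dx^α dx^β g_{mβ} S^m_{ij} J^k_α = S^α_{ij} J^k_α` holds. -/
theorem stmt6 {n : ℕ}
    (J Jinv : Fin n → Fin n → ℝ)
    (S : Fin n → Fin n → Fin n → ℝ)
    (Γ Γ' : Fin n → Fin n → Fin n → ℝ)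
    (g g' : Fin n → Fin n → ℝ)
    (dx dX : Fin n → ℝ)
    (hJ : ∀ k i, (∑ m, J k m * Jinv m i) = if k = i then (1 : ℝ) else 0)
    (hdX : ∀ k, dX k = ∑ α, J k α * dx α)
    (hg' : ∀ i j, g' i j = ∑ k, ∑ l, Jinv k i * Jinv l j * g k l)
    (hΓ' : ∀ k i j, Γ' k i j =
      (∑ m, ∑ a, ∑ b, Γ m a b * J k m * Jinv a i * Jinv b j) + ∑ m, S m i j * J k m) :
    ((∀ k i j, (∑ r, ∑ s, dX k * dX r * g' s r * Γ' s i j)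
        = (∑ m, ∑ a, ∑ b,
            (∑ β, ∑ s, dx m * dx β * g s β * Γ s a b) * J k m * Jinv a i * Jinv b j)
          + ∑ m, S m i j * J k m)
      ↔ (∀ i j k, (∑ α, ∑ β, ∑ m, dx α * dx β * g m β * S m i j * J k α)
          = ∑ α, S α i j * J k α)) := by
  classical
  have rot : ∀ (f : Fin n → Fin n → ℝ), (∑ a, ∑ b, f a b) = ∑ b, ∑ a, f a b :=
    fun f => Finset.sum_comm
  have rot4 : ∀ (f : Fin n → Fin n → Fin n → Fin n → ℝ),
      (∑ a, ∑ b, ∑ c, ∑ d, f a b c d) = ∑ b, ∑ c, ∑ d, ∑ a, f a b c d := by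
    intro f
    rw [rot (fun a b => ∑ c, ∑ d, f a b c d)]
    refine Finset.sum_congr rfl fun b _ => ?_
    rw [rot (fun a c => ∑ d, f a b c d)]
    exact Finset.sum_congr rfl fun c _ => rot (fun a d => f a b c d)
  -- Jinv is also a left inverse of J
  have hJ' : ∀ l α, (∑ r, Jinv l r * J r α) = if l = α then (1 : ℝ) else 0 := by
    have h1 : (Matrix.of J) * (Matrix.of Jinv) = 1 := by
      ext k i
      simpa [Matrix.mul_apply, Matrix.one_apply] using hJ k i
    have h2 : (Matrix.of Jinv) * (Matrix.of J) = 1 := mul_eq_one_comm.mp h1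
    intro l α
    have h3 := congrFun (congrFun h2 l) α
    simpa [Matrix.mul_apply, Matrix.one_apply] using h3
  -- contraction of T with J
  have hTJ : ∀ m, (∑ s, (∑ α, ∑ p, dx α * g p α * Jinv p s) * J s m)
      = ∑ α, dx α * g m α := by
    intro m
    calc ∑ s, (∑ α, ∑ p, dx α * g p α * Jinv p s) * J s m
        = ∑ s, ∑ α, ∑ p, dx α * g p α * (Jinv p s * J s m) := by
          refine Finset.sum_congr rfl fun s _ => ?_
          rw [Finset.sum_mul]
          refine Finset.sum_congr rfl fun α _ => ?_
          rw [Finset.sum_mul]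
          exact Finset.sum_congr rfl fun p _ => by ring
      _ = ∑ α, ∑ p, dx α * g p α * (∑ s, Jinv p s * J s m) := by
          rw [Finset.sum_comm]
          refine Finset.sum_congr rfl fun α _ => ?_
          rw [Finset.sum_comm]
          exact Finset.sum_congr rfl fun p _ => (Finset.mul_sum _ _ _).symm
      _ = ∑ α, dx α * g m α := by
          simp only [hJ', mul_ite, mul_one, mul_zero]
          refine Finset.sum_congr rfl fun α _ => ?_
          simp [Finset.sum_ite_eq']
  -- contraction for dX r * g' s r
  have c1 : ∀ s, (∑ r, dX r * g' s r) = ∑ α, ∑ p, dx α * g p α * Jinv p s := by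
    intro s
    calc ∑ r, dX r * g' s r
        = ∑ r, ∑ α, ∑ p, ∑ l, dx α * g p l * Jinv p s * (Jinv l r * J r α) := by
          refine Finset.sum_congr rfl fun r _ => ?_
          rw [hdX, hg', Finset.sum_mul]
          refine Finset.sum_congr rfl fun α _ => ?_
          rw [Finset.mul_sum]
          refine Finset.sum_congr rfl fun p _ => ?_
          rw [Finset.mul_sum]
          exact Finset.sum_congr rfl fun l _ => by ring
      _ = ∑ α, ∑ p, ∑ l, dx α * g p l * Jinv p s * (∑ r, Jinv l r * J r α) := by
          rw [Finset.sum_comm]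
          refine Finset.sum_congr rfl fun α _ => ?_
          rw [Finset.sum_comm]
          refine Finset.sum_congr rfl fun p _ => ?_
          rw [Finset.sum_comm]
          exact Finset.sum_congr rfl fun l _ => (Finset.mul_sum _ _ _).symm
      _ = ∑ α, ∑ p, dx α * g p α * Jinv p s := by
          simp only [hJ', mul_ite, mul_one, mul_zero]
          refine Finset.sum_congr rfl fun α _ => ?_
          refine Finset.sum_congr rfl fun p _ => ?_
          simp [Finset.sum_ite_eq']
  have key : ∀ k i j, (∑ r, ∑ s, dX k * dX r * g' s r * Γ' s i j)
      = (∑ m, ∑ a, ∑ b,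
          (∑ β, ∑ s, dx m * dx β * g s β * Γ s a b) * J k m * Jinv a i * Jinv b j)
        + ∑ α, ∑ β, ∑ m, dx α * dx β * g m β * S m i j * J k α := by
    intro k i j
    have piece1 : (∑ s, (∑ α, ∑ p, dx α * g p α * Jinv p s)
          * (∑ m, ∑ a, ∑ b, Γ m a b * J s m * Jinv a i * Jinv b j))
        = ∑ m, ∑ a, ∑ b, (Γ m a b * Jinv a i * Jinv b j) * (∑ α, dx α * g m α) := by
      calc ∑ s, (∑ α, ∑ p, dx α * g p α * Jinv p s)
              * (∑ m, ∑ a, ∑ b, Γ m a b * J s m * Jinv a i * Jinv b j)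
          = ∑ s, ∑ m, ∑ a, ∑ b, (Γ m a b * Jinv a i * Jinv b j)
              * ((∑ α, ∑ p, dx α * g p α * Jinv p s) * J s m) := by
            refine Finset.sum_congr rfl fun s _ => ?_
            rw [Finset.mul_sum]
            refine Finset.sum_congr rfl fun m _ => ?_
            rw [Finset.mul_sum]
            refine Finset.sum_congr rfl fun a _ => ?_
            rw [Finset.mul_sum]
            exact Finset.sum_congr rfl fun b _ => by ring
        _ = ∑ m, ∑ a, ∑ b, (Γ m a b * Jinv a i * Jinv b j)
              * (∑ s, (∑ α, ∑ p, dx α * g p α * Jinv p s) * J s m) := by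
            rw [Finset.sum_comm]
            refine Finset.sum_congr rfl fun m _ => ?_
            rw [Finset.sum_comm]
            refine Finset.sum_congr rfl fun a _ => ?_
            rw [Finset.sum_comm]
            exact Finset.sum_congr rfl fun b _ => (Finset.mul_sum _ _ _).symm
        _ = ∑ m, ∑ a, ∑ b, (Γ m a b * Jinv a i * Jinv b j) * (∑ α, dx α * g m α) := by
            simp only [hTJ]
    have piece2 : (∑ s, (∑ α, ∑ p, dx α * g p α * Jinv p s) * (∑ m, S m i j * J s m))
        = ∑ m, S m i j * (∑ α, dx α * g m α) := by
      calc ∑ s, (∑ α, ∑ p, dx α * g p α * Jinv p s) * (∑ m, S m i j * J s m)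
          = ∑ s, ∑ m, S m i j * ((∑ α, ∑ p, dx α * g p α * Jinv p s) * J s m) := by
            refine Finset.sum_congr rfl fun s _ => ?_
            rw [Finset.mul_sum]
            exact Finset.sum_congr rfl fun m _ => by ring
        _ = ∑ m, S m i j * (∑ s, (∑ α, ∑ p, dx α * g p α * Jinv p s) * J s m) := by
            rw [Finset.sum_comm]
            exact Finset.sum_congr rfl fun m _ => (Finset.mul_sum _ _ _).symm
        _ = ∑ m, S m i j * (∑ α, dx α * g m α) := by simp only [hTJ]
    calc ∑ r, ∑ s, dX k * dX r * g' s r * Γ' s i j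
        = ∑ s, dX k * ((∑ r, dX r * g' s r) * Γ' s i j) := by
          rw [Finset.sum_comm]
          refine Finset.sum_congr rfl fun s _ => ?_
          rw [Finset.sum_mul, Finset.mul_sum]
          exact Finset.sum_congr rfl fun r _ => by ring
      _ = dX k * ((∑ s, (∑ α, ∑ p, dx α * g p α * Jinv p s)
              * (∑ m, ∑ a, ∑ b, Γ m a b * J s m * Jinv a i * Jinv b j))
            + ∑ s, (∑ α, ∑ p, dx α * g p α * Jinv p s) * (∑ m, S m i j * J s m)) := by
          rw [← Finset.mul_sum, ← Finset.sum_add_distrib]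
          congr 1
          refine Finset.sum_congr rfl fun s _ => ?_
          rw [c1, hΓ', mul_add]
      _ = (∑ β, J k β * dx β) * ((∑ m, ∑ a, ∑ b, (Γ m a b * Jinv a i * Jinv b j)
              * (∑ α, dx α * g m α))
            + ∑ m, S m i j * (∑ α, dx α * g m α)) := by
          rw [piece1, piece2, hdX]
      _ = (∑ m, ∑ a, ∑ b,
            (∑ β, ∑ s, dx m * dx β * g s β * Γ s a b) * J k m * Jinv a i * Jinv b j)
          + ∑ α, ∑ β, ∑ m, dx α * dx β * g m β * S m i j * J k α := by
          rw [mul_add]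
          congr 1
          · -- first product
            calc (∑ β, J k β * dx β) * (∑ m, ∑ a, ∑ b,
                    (Γ m a b * Jinv a i * Jinv b j) * (∑ α, dx α * g m α))
                = ∑ β, ∑ m, ∑ a, ∑ b, ∑ α,
                    (J k β * dx β) * ((Γ m a b * Jinv a i * Jinv b j) * (dx α * g m α)) := by
                  rw [Finset.sum_mul]
                  refine Finset.sum_congr rfl fun β _ => ?_
                  rw [Finset.mul_sum]
                  refine Finset.sum_congr rfl fun m _ => ?_
                  rw [Finset.mul_sum]
                  refine Finset.sum_congr rfl fun a _ => ?_
                  rw [Finset.mul_sum]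
                  refine Finset.sum_congr rfl fun b _ => ?_
                  rw [Finset.mul_sum, Finset.mul_sum]
              _ = ∑ β, ∑ a, ∑ b, ∑ α, ∑ m,
                    (J k β * dx β) * ((Γ m a b * Jinv a i * Jinv b j) * (dx α * g m α)) := by
                  refine Finset.sum_congr rfl fun β _ => ?_
                  exact rot4 (fun m a b α =>
                    (J k β * dx β) * ((Γ m a b * Jinv a i * Jinv b j) * (dx α * g m α)))
              _ = ∑ m, ∑ a, ∑ b,
                    (∑ β, ∑ s, dx m * dx β * g s β * Γ s a b) * J k m * Jinv a i * Jinv b j := by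
                  refine Finset.sum_congr rfl fun β _ => ?_
                  refine Finset.sum_congr rfl fun a _ => ?_
                  refine Finset.sum_congr rfl fun b _ => ?_
                  rw [Finset.sum_mul, Finset.sum_mul, Finset.sum_mul]
                  refine Finset.sum_congr rfl fun α _ => ?_
                  rw [Finset.sum_mul, Finset.sum_mul, Finset.sum_mul]
                  exact Finset.sum_congr rfl fun m _ => by ring
          · -- second product
            calc (∑ β, J k β * dx β) * (∑ m, S m i j * (∑ α, dx α * g m α))
                = ∑ β, ∑ m, ∑ α, (J k β * dx β) * (S m i j * (dx α * g m α)) := by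
                  rw [Finset.sum_mul]
                  refine Finset.sum_congr rfl fun β _ => ?_
                  rw [Finset.mul_sum]
                  refine Finset.sum_congr rfl fun m _ => ?_
                  rw [Finset.mul_sum, Finset.mul_sum]
              _ = ∑ β, ∑ α, ∑ m, (J k β * dx β) * (S m i j * (dx α * g m α)) := by
                  refine Finset.sum_congr rfl fun β _ => ?_
                  rw [Finset.sum_comm]
              _ = ∑ α, ∑ β, ∑ m, dx α * dx β * g m β * S m i j * J k α := by
                  refine Finset.sum_congr rfl fun α _ => ?_
                  refine Finset.sum_congr rfl fun β _ => ?_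
                  exact Finset.sum_congr rfl fun m _ => by ring
  constructor
  · intro h i j k
    have h2 := (key k i j).symm.trans (h k i j)
    exact add_left_cancel h2
  · intro h k i j
    rw [key k i j, h i j k]
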